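/- (Corollary 1) Let X be a variable with parent set U (X ∉ U) and let f be a functional CPT for X over {X} ∪ U. Let G be a factor over a variable set Y ⊇ {X} ∪ U of the form G = f · G₀ for some factor G₀, and let H be a factor over a variable set W ⊇ {X} ∪ U of the form H = f · H₀ for some factor H₀. Then summing out X from the product G · H factorizes: ∑_X (G · H) = (∑_X G) · (∑_X H) as factors over (Y ∪ W) \ {X}. -/

import Mathlib

/-- An instantiation of the variables in `S`, where variable `i` has value set `V i`. -/
abbrev Inst {ι : Type*} (V : ι → Type*) (S : Finset ι) : Type _ :=
  ∀ i : S, V i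

/-- Restrict an instantiation of `T` to a subset `S ⊆ T`. -/
def Inst.restrict {ι : Type*} {V : ι → Type*} {S T : Finset ι} (h : S ⊆ T)
    (z : Inst V T) : Inst V S :=
  fun i => z ⟨i, h i.2⟩

/-- Transport an instantiation along an equality of variable sets. -/
def Inst.cast {ι : Type*} {V : ι → Type*} {S T : Finset ι} (h : S = T)
    (z : Inst V S) : Inst V T :=
  fun i => z ⟨i, h.symm ▸ i.2⟩

/-- Extend an instantiation `u` of `U` with a value `x` for the variable `X`,
yielding an instantiation of `insert X U`. -/
def Inst.consX {ι : Type*} [DecidableEq ι] {V : ι → Type*} {U : Finset ι} (X : ι)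
    (x : V X) (u : Inst V U) : Inst V (insert X U) :=
  fun i => if h : (i : ι) = X then _root_.cast (congrArg V h).symm x
           else u ⟨i, (Finset.mem_insert.mp i.2).resolve_left h⟩

/-- Extend an instantiation `w` of `W \ {X}` with a value `x` for `X ∈ W`,
yielding an instantiation of `W`. -/
def Inst.extendAt {ι : Type*} [DecidableEq ι] {V : ι → Type*} {W : Finset ι} (X : ι)
    (_hX : X ∈ W) (x : V X) (w : Inst V (W \ {X})) : Inst V W :=
  fun i => if h : (i : ι) = X then _root_.cast (congrArg V h).symm x
           else w ⟨i, Finset.mem_sdiff.mpr ⟨i.2, Finset.notMem_singleton.mpr h⟩⟩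

/-- The product of a factor over `S` and a factor over `T` is a factor over `S ∪ T`. -/
def Factor.mul {ι : Type*} [DecidableEq ι] {V : ι → Type*} {S T : Finset ι}
    (f : Inst V S → ℝ) (g : Inst V T → ℝ) : Inst V (S ∪ T) → ℝ :=
  fun z => f (fun i => z ⟨i, Finset.mem_union_left _ i.2⟩) *
           g (fun i => z ⟨i, Finset.mem_union_right _ i.2⟩)

/-- Summing out the variables `Y ⊆ S` from a factor over `S` yields a factor over `S \ Y`. -/
noncomputable def Factor.sumOut {ι : Type*} [DecidableEq ι] {V : ι → Type*}
    [∀ i, Fintype (V i)] {S : Finset ι} (Y : Finset ι) (_hY : Y ⊆ S)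
    (f : Inst V S → ℝ) : Inst V (S \ Y) → ℝ :=
  fun z => ∑ y : Inst V Y, f fun i =>
    if h : (i : ι) ∈ Y then y ⟨i, h⟩ else z ⟨i, Finset.mem_sdiff.mpr ⟨i.2, h⟩⟩

lemma func_sum_mul {α : Type*} [Fintype α] [DecidableEq α] (φ a b : α → ℝ)
    (h01 : ∀ x, φ x = 0 ∨ φ x = 1) (hsum : ∑ x, φ x = 1) :
    (∑ x, (φ x * a x) * (φ x * b x)) = (∑ x, φ x * a x) * (∑ x, φ x * b x) := by
  obtain ⟨x₀, hx₀⟩ : ∃ x₀, φ x₀ = 1 := by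
    by_contra hne
    push_neg at hne
    have h0 : ∀ x, φ x = 0 := fun x => (h01 x).resolve_right (hne x)
    simp [h0] at hsum
  have herase : ∑ y ∈ Finset.univ.erase x₀, φ y = 0 := by
    have h := Finset.add_sum_erase Finset.univ φ (Finset.mem_univ x₀)
    rw [hsum] at h
    linarith
  have hzero : ∀ x, x ≠ x₀ → φ x = 0 := by
    intro x hx
    exact (Finset.sum_eq_zero_iff_of_nonneg (fun y _ => by
      rcases h01 y with h | h <;> rw [h] <;> norm_num)).mp herase x
      (Finset.mem_erase.mpr ⟨hx, Finset.mem_univ x⟩)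
  have key : ∀ c : α → ℝ, ∑ x, φ x * c x = c x₀ := by
    intro c
    rw [Finset.sum_eq_single x₀ (fun x _ hx => by rw [hzero x hx]; ring)
      (fun h => absurd (Finset.mem_univ x₀) h)]
    rw [hx₀]; ring
  have key2 : (∑ x, (φ x * a x) * (φ x * b x)) = a x₀ * b x₀ := by
    rw [Finset.sum_eq_single x₀ (fun x _ hx => by rw [hzero x hx]; ring)
      (fun h => absurd (Finset.mem_univ x₀) h)]
    rw [hx₀]; ring
  rw [key, key, key2]

/-- **Corollary 1 of the paper.** Let `f` be a functional CPT for variable `X`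
with parents `U`. If the products `G` (over `Y ⊇ {X} ∪ U`) and `H` (over `W ⊇ {X} ∪ U`)
both contain `f` as a multiplicand, then `∑_X (G · H) = (∑_X G) · (∑_X H)` as factors over
`(Y ∪ W) \ {X}`. -/
theorem sumOut_mul_factorizes_of_functional {ι : Type*} [DecidableEq ι] (V : ι → Type*)
    [∀ i, Fintype (V i)] [∀ i, Nonempty (V i)]
    (X : ι) (U : Finset ι) (hXU : X ∉ U)
    (f : Inst V (insert X U) → ℝ)
    (hcpt : ∀ u : Inst V U, ∑ x : V X, f (Inst.consX X x u) = 1)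
    (hfun : ∀ (x : V X) (u : Inst V U),
      f (Inst.consX X x u) = 0 ∨ f (Inst.consX X x u) = 1)
    (Y W : Finset ι) (hY : insert X U ⊆ Y) (hW : insert X U ⊆ W)
    (G : Inst V Y → ℝ) (H : Inst V W → ℝ)
    (G₀ : Inst V Y → ℝ) (hG : ∀ z : Inst V Y, G z = f (Inst.restrict hY z) * G₀ z)
    (H₀ : Inst V W → ℝ) (hH : ∀ z : Inst V W, H z = f (Inst.restrict hW z) * H₀ z) :
    ∀ z : Inst V ((Y ∪ W) \ {X}),
      Factor.sumOut {X}
          (Finset.singleton_subset_iff.mpr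
            (Finset.mem_union_left W (hY (Finset.mem_insert_self X U))))
          (Factor.mul G H) z
        = Factor.mul
            (Factor.sumOut {X}
              (Finset.singleton_subset_iff.mpr (hY (Finset.mem_insert_self X U))) G)
            (Factor.sumOut {X}
              (Finset.singleton_subset_iff.mpr (hW (Finset.mem_insert_self X U))) H)
            (Inst.cast
              (by
                ext a
                simp only [Finset.mem_union, Finset.mem_sdiff, Finset.mem_singleton]
                tauto) z) := by
  classical
  intro z
  -- equivalence between V X and instantiations of {X}
  let e : V X ≃ Inst V ({X} : Finset ι) :=
    { toFun := fun x i => _root_.cast (congrArg V (Finset.mem_singleton.mp i.2)).symm x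
      invFun := fun y => y ⟨X, Finset.mem_singleton_self X⟩
      left_inv := fun x => rfl
      right_inv := fun y => by
        funext i
        obtain ⟨i, hi⟩ := i
        have : i = X := Finset.mem_singleton.mp hi
        subst this
        rfl }
  -- parent instantiation extracted from z
  have hUsub : ∀ i ∈ U, i ∈ (Y ∪ W) \ ({X} : Finset ι) := by
    intro i hi
    refine Finset.mem_sdiff.mpr ⟨Finset.mem_union_left _ (hY (Finset.mem_insert_of_mem hi)), ?_⟩
    simp only [Finset.mem_singleton]
    rintro rfl
    exact hXU hi
  let u : Inst V U := fun i => z ⟨i, hUsub i i.2⟩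
  -- assembled instantiations
  let instY : V X → Inst V Y := fun x i =>
    if h : (i : ι) ∈ ({X} : Finset ι) then e x ⟨i, h⟩
    else z ⟨i, Finset.mem_sdiff.mpr ⟨Finset.mem_union_left _ i.2, h⟩⟩
  let instW : V X → Inst V W := fun x i =>
    if h : (i : ι) ∈ ({X} : Finset ι) then e x ⟨i, h⟩
    else z ⟨i, Finset.mem_sdiff.mpr ⟨Finset.mem_union_right _ i.2, h⟩⟩
  have hres : ∀ x : V X, Inst.restrict hY (instY x) = Inst.consX X x u := by
    intro x
    funext i
    by_cases h : (i : ι) = X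
    · simp only [Inst.restrict, Inst.consX, instY,
        dif_pos (Finset.mem_singleton.mpr h), dif_pos h]
      rfl
    · simp only [Inst.restrict, Inst.consX, instY, dif_neg h,
        dif_neg (fun hh => h (Finset.mem_singleton.mp hh))]
      rfl
  have hresW : ∀ x : V X, Inst.restrict hW (instW x) = Inst.consX X x u := by
    intro x
    funext i
    by_cases h : (i : ι) = X
    · simp only [Inst.restrict, Inst.consX, instW,
        dif_pos (Finset.mem_singleton.mpr h), dif_pos h]
      rfl
    · simp only [Inst.restrict, Inst.consX, instW, dif_neg h,
        dif_neg (fun hh => h (Finset.mem_singleton.mp hh))]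
      rfl
  have lhs_eq : Factor.sumOut {X}
      (Finset.singleton_subset_iff.mpr
        (Finset.mem_union_left W (hY (Finset.mem_insert_self X U))))
      (Factor.mul G H) z
      = ∑ x : V X, G (instY x) * H (instW x) :=
    (Fintype.sum_equiv e (fun x => G (instY x) * H (instW x)) _ fun _ => rfl).symm
  rw [lhs_eq]
  refine Eq.trans ?_ (congrArg₂ (· * ·)
    (Fintype.sum_equiv e (fun x => G (instY x)) _ fun _ => rfl)
    (Fintype.sum_equiv e (fun x => H (instW x)) _ fun _ => rfl))
  calc ∑ x : V X, G (instY x) * H (instW x)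
      = ∑ x : V X, (f (Inst.consX X x u) * G₀ (instY x)) *
          (f (Inst.consX X x u) * H₀ (instW x)) :=
        Finset.sum_congr rfl fun x _ => by rw [hG, hres, hH, hresW]
    _ = (∑ x : V X, f (Inst.consX X x u) * G₀ (instY x)) *
          (∑ x : V X, f (Inst.consX X x u) * H₀ (instW x)) :=
        func_sum_mul _ _ _ (fun x => hfun x u) (hcpt u)
    _ = (∑ x : V X, G (instY x)) * (∑ x : V X, H (instW x)) := by
        congr 1 <;> refine Finset.sum_congr rfl fun x _ => ?_
        · rw [hG, hres]
        · rw [hH, hresW]
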